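/- There exist only finitely many diagrams of initial exponents Δ ⊆ ℕ^k (subsets closed under addition of ℕ^k, equivalently monomial ideals) having a given Hilbert-Samuel function H(Δ)(s) = #{α ∉ Δ : |α| ≤ s}. -/

import Mathlib

open Set Filter Topology

/-- `Δ ⊆ ℕ^k` is a diagram of initial exponents if `Δ + ℕ^k ⊆ Δ`. -/
def IsDiagram {k : ℕ} (Δ : Set (Fin k → ℕ)) : Prop :=
  ∀ α ∈ Δ, ∀ β : Fin k → ℕ, α + β ∈ Δ

section Aux

variable {k : ℕ}

lemma finite_ball (k s : ℕ) : {α : Fin k → ℕ | ∑ t, α t ≤ s}.Finite := by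
  apply Set.Finite.subset (Set.Finite.pi (fun i : Fin k => Set.finite_Iic s))
  intro α hα
  simp only [Set.mem_pi, Set.mem_univ, Set.mem_Iic, forall_true_left]
  intro i
  exact le_trans (Finset.single_le_sum (fun j _ => Nat.zero_le (α j)) (Finset.mem_univ i)) hα

lemma dickson {k : ℕ} (M : Set (Fin k → ℕ)) : M.IsPWO :=
  Set.isPWO_of_wellQuasiOrderedLE M

lemma wf_lt (k : ℕ) : WellFounded ((· < ·) : (Fin k → ℕ) → (Fin k → ℕ) → Prop) :=
  (Set.isWF_univ_iff.mp (dickson _).isWF).wf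

lemma exists_gen {Δ : Set (Fin k → ℕ)} :
    ∃ G : Finset (Fin k → ℕ), (↑G : Set (Fin k → ℕ)) ⊆ Δ ∧ ∀ α ∈ Δ, ∃ g ∈ G, g ≤ α := by
  classical
  set M : Set (Fin k → ℕ) := {m | m ∈ Δ ∧ ∀ b ∈ Δ, ¬ b < m} with hM
  have hanti : IsAntichain (· ≤ ·) M := by
    intro a ha b hb hne hle
    exact hb.2 a ha.1 (lt_of_le_of_ne hle hne)
  have hMfin : M.Finite := hanti.finite_of_partiallyWellOrderedOn (dickson M)
  refine ⟨hMfin.toFinset, ?_, ?_⟩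
  · intro g hg
    have hg' : g ∈ M := by simpa using hg
    exact hg'.1
  · intro α hα
    obtain ⟨m, hm, hmin⟩ := (wf_lt k).has_min {β | β ∈ Δ ∧ β ≤ α} ⟨α, hα, le_refl α⟩
    refine ⟨m, ?_, hm.2⟩
    rw [Set.Finite.mem_toFinset]
    exact ⟨hm.1, fun b hb hblt => hmin b ⟨hb, le_trans hblt.le hm.2⟩ hblt⟩

lemma exists_add_of_le_pi {g α : Fin k → ℕ} (h : g ≤ α) : ∃ β, α = g + β := by
  refine ⟨α - g, funext fun i => ?_⟩
  have hi : g i ≤ α i := h i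
  simp only [Pi.add_apply, Pi.sub_apply]
  omega

end Aux

/-- There exist only finitely many diagrams of initial exponents `Δ ⊆ ℕ^k`
with a given Hilbert–Samuel function `H(Δ)(s) = #{α ∉ Δ : |α| ≤ s}`. -/
theorem finitely_many_diagrams_with_hilbert_samuel {k : ℕ} (H : ℕ → ℕ) :
    {Δ : Set (Fin k → ℕ) | IsDiagram Δ ∧
      ∀ s : ℕ, {α : Fin k → ℕ | α ∉ Δ ∧ ∑ t, α t ≤ s}.ncard = H s}.Finite := by
  classical
  set S := {Δ : Set (Fin k → ℕ) | IsDiagram Δ ∧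
      ∀ s : ℕ, {α : Fin k → ℕ | α ∉ Δ ∧ ∑ t, α t ≤ s}.ncard = H s} with hS
  set f : Set (Fin k → ℕ) → ((Fin k → ℕ) → Bool) := fun Δ α => decide (α ∈ Δ) with hf
  have hf_inj : Function.Injective f := by
    intro Δ₁ Δ₂ h
    ext α
    have := congrFun h α
    simpa [hf] using this
  suffices himg : (f '' S).Finite by
    exact himg.of_finite_image (hf_inj.injOn)
  by_contra hinf
  obtain ⟨x, hx⟩ := Set.Infinite.exists_accPt_principal hinf
  -- for each s, there is χ ∈ f '' S, χ ≠ x, agreeing with x on the ball of radius s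
  have key : ∀ s : ℕ, ∃ Δ' ∈ S, f Δ' ≠ x ∧ ∀ α : Fin k → ℕ, ∑ t, α t ≤ s → f Δ' α = x α := by
    intro s
    set U : Set ((Fin k → ℕ) → Bool) :=
      ⋂ α ∈ (finite_ball k s).toFinset, {χ | χ α = x α} with hU
    have hUopen : IsOpen U := by
      apply isOpen_biInter_finset
      intro α _
      have : {χ : (Fin k → ℕ) → Bool | χ α = x α} = (fun χ : (Fin k → ℕ) → Bool => χ α) ⁻¹' ({x α} : Set Bool) := rfl
      rw [this]
      exact (continuous_apply α).isOpen_preimage _ (isOpen_discrete _)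
    have hxU : x ∈ U := by
      simp [hU]
    obtain ⟨y, ⟨hyU, hyS⟩, hyne⟩ := (accPt_iff_nhds (x := x) (C := f '' S)).mp hx U (hUopen.mem_nhds hxU)
    obtain ⟨Δ', hΔ'S, rfl⟩ := hyS
    refine ⟨Δ', hΔ'S, hyne, ?_⟩
    intro α hα
    simp only [hU, Set.mem_iInter, Set.mem_setOf_eq] at hyU
    exact hyU α (by simpa using hα)
  set Δx : Set (Fin k → ℕ) := {α | x α = true} with hΔx
  have hfx : f Δx = x := by
    funext α
    simp [hf, hΔx]
  -- membership translation
  have mem_iff : ∀ (Δ' : Set (Fin k → ℕ)) (α : Fin k → ℕ), f Δ' α = x α → (α ∈ Δ' ↔ α ∈ Δx) := by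
    intro Δ' α h
    simp only [hf] at h
    simp only [hΔx, Set.mem_setOf_eq, ← h, decide_eq_true_eq]
  -- Step B: Δx ∈ S
  have hΔxS : Δx ∈ S := by
    constructor
    · -- diagram
      intro α hα β
      obtain ⟨Δ', hΔ'S, _, hagree⟩ := key (∑ t, α t + ∑ t, β t)
      have hαΔ' : α ∈ Δ' := (mem_iff Δ' α (hagree α (by omega))).mpr hα
      have hsum : ∑ t, (α + β) t = ∑ t, α t + ∑ t, β t := by
        simp [Finset.sum_add_distrib]
      exact (mem_iff Δ' (α + β) (hagree (α + β) (by omega))).mp (hΔ'S.1 α hαΔ' β)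
    · -- Hilbert function
      intro s
      obtain ⟨Δ', hΔ'S, _, hagree⟩ := key s
      have : {α : Fin k → ℕ | α ∉ Δx ∧ ∑ t, α t ≤ s}
          = {α : Fin k → ℕ | α ∉ Δ' ∧ ∑ t, α t ≤ s} := by
        ext α
        simp only [Set.mem_setOf_eq]
        constructor
        · rintro ⟨h1, h2⟩
          exact ⟨fun hc => h1 ((mem_iff Δ' α (hagree α h2)).mp hc), h2⟩
        · rintro ⟨h1, h2⟩
          exact ⟨fun hc => h1 ((mem_iff Δ' α (hagree α h2)).mpr hc), h2⟩
      rw [this, hΔ'S.2 s]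
  -- Step C: contradiction
  obtain ⟨G, hGsub, hGgen⟩ := exists_gen (Δ := Δx)
  set s₀ := G.sup (fun g => ∑ t, g t) with hs₀
  obtain ⟨Δ', hΔ'S, hne, hagree⟩ := key s₀
  have hsub : Δx ⊆ Δ' := by
    intro α hα
    obtain ⟨g, hgG, hgle⟩ := hGgen α hα
    have hgball : ∑ t, g t ≤ s₀ := Finset.le_sup hgG
    have hgΔ' : g ∈ Δ' := (mem_iff Δ' g (hagree g hgball)).mpr (hGsub hgG)
    obtain ⟨β, rfl⟩ := exists_add_of_le_pi hgle
    exact hΔ'S.1 g hgΔ' β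
  have heq : Δ' = Δx := by
    ext α
    have hsub' : {γ : Fin k → ℕ | γ ∉ Δ' ∧ ∑ t, γ t ≤ ∑ t, α t}
        ⊆ {γ : Fin k → ℕ | γ ∉ Δx ∧ ∑ t, γ t ≤ ∑ t, α t} :=
      fun γ hγ => ⟨fun hc => hγ.1 (hsub hc), hγ.2⟩
    have hcard : {γ : Fin k → ℕ | γ ∉ Δx ∧ ∑ t, γ t ≤ ∑ t, α t}.ncard
        ≤ {γ : Fin k → ℕ | γ ∉ Δ' ∧ ∑ t, γ t ≤ ∑ t, α t}.ncard := by
      rw [hΔxS.2, hΔ'S.2]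
    have hfin : {γ : Fin k → ℕ | γ ∉ Δx ∧ ∑ t, γ t ≤ ∑ t, α t}.Finite :=
      (finite_ball k _).subset fun γ hγ => hγ.2
    have := Set.eq_of_subset_of_ncard_le hsub' hcard hfin
    constructor
    · intro hα
      by_contra hc
      have : α ∈ {γ : Fin k → ℕ | γ ∉ Δ' ∧ ∑ t, γ t ≤ ∑ t, α t} := by
        rw [this]; exact ⟨hc, le_refl _⟩
      exact this.1 hα
    · exact fun hα => hsub hα
  exact hne (by rw [heq, hfx])
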